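/- arXiv:1810.12216 — 2 statements merged into one kernel-verified Lean document; each statement's English description precedes it below -/
import Mathlib

section
/- Let V₃ have basis v₁,v₂,v₃ and V₆ have basis e₁,…,e₆, and set ω₁ = a·e₁∧e₂ + b·e₃∧e₆ + c·e₅∧e₄, ω₂ = a·e₃∧e₄ + b·e₅∧e₂ + c·e₁∧e₆, ω₃ = a·e₅∧e₆ + b·e₁∧e₄ + c·e₃∧e₂ for scalars a,b,c ∈ ℂ. Then the map Sym²⟨ω₁,ω₂,ω₃⟩ → ⋀⁴V₆ (induced by wedge product) is injective if and only if the vectors (a²,b²,c²) and (bc,ac,ab) in ℂ³ are not proportional. -/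
open ExteriorAlgebra

noncomputable section

abbrev V6 := Fin 6 → ℂ

/-- standard basis vectors of ℂ⁶ -/
def e (i : Fin 6) : V6 := Pi.single i 1

/-- image of basis vectors in the exterior algebra -/
def ev (i : Fin 6) : ExteriorAlgebra ℂ V6 := ExteriorAlgebra.ι ℂ (e i)

/-- the volume element e₀∧e₁∧e₂∧e₃∧e₄∧e₅ -/
def vol : ExteriorAlgebra ℂ V6 := ev 0 * ev 1 * ev 2 * ev 3 * ev 4 * ev 5

lemma ev_sq (i : Fin 6) : ev i * ev i = 0 := ι_sq_zero _

lemma ev_anti (i j : Fin 6) : ev i * ev j = -(ev j * ev i) := by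
  have h : ι ℂ (e i + e j) * ι ℂ (e i + e j) = 0 := ι_sq_zero _
  rw [map_add, add_mul, mul_add, mul_add] at h
  have h1 : ι ℂ (e i) * ι ℂ (e i) = 0 := ι_sq_zero _
  have h2 : ι ℂ (e j) * ι ℂ (e j) = 0 := ι_sq_zero _
  rw [h1, h2] at h
  simp only [ev]
  linear_combination (norm := noncomm_ring) h

lemma s1 (i j k l : Fin 6) : ev i * ev j * ev k * ev l = -(ev j * ev i * ev k * ev l) := by
  rw [ev_anti i j]; noncomm_ring
lemma s2 (i j k l : Fin 6) : ev i * ev j * ev k * ev l = -(ev i * ev k * ev j * ev l) := by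
  rw [mul_assoc (ev i) (ev j) (ev k), ev_anti j k]; noncomm_ring
lemma s3 (i j k l : Fin 6) : ev i * ev j * ev k * ev l = -(ev i * ev j * ev l * ev k) := by
  rw [mul_assoc (ev i * ev j) (ev k) (ev l), ev_anti k l]; noncomm_ring
lemma z1 (i k l : Fin 6) : ev i * ev i * ev k * ev l = 0 := by
  rw [ev_sq]; noncomm_ring
lemma z2 (i j l : Fin 6) : ev i * ev j * ev j * ev l = 0 := by
  rw [mul_assoc (ev i) (ev j) (ev j), ev_sq]; noncomm_ring
lemma z3 (i j k : Fin 6) : ev i * ev j * ev k * ev k = 0 := by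
  rw [mul_assoc (ev i * ev j) (ev k) (ev k), ev_sq]; noncomm_ring

lemma m0101 : ev 0 * ev 1 * ev 0 * ev 1 = 0 := by
  rw [s2 0 1 0 1, z1 0 1 1]
  try simp only [neg_neg, neg_zero]

lemma m0103 : ev 0 * ev 1 * ev 0 * ev 3 = 0 := by
  rw [s2 0 1 0 3, z1 0 1 3]
  try simp only [neg_neg, neg_zero]

lemma m0105 : ev 0 * ev 1 * ev 0 * ev 5 = 0 := by
  rw [s2 0 1 0 5, z1 0 1 5]
  try simp only [neg_neg, neg_zero]

lemma m0121 : ev 0 * ev 1 * ev 2 * ev 1 = 0 := by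
  rw [s3 0 1 2 1, z2 0 1 2]
  try simp only [neg_neg, neg_zero]

lemma m0141 : ev 0 * ev 1 * ev 4 * ev 1 = 0 := by
  rw [s3 0 1 4 1, z2 0 1 4]
  try simp only [neg_neg, neg_zero]

lemma m0143 : ev 0 * ev 1 * ev 4 * ev 3 = -(ev 0 * ev 1 * ev 3 * ev 4) := by
  rw [s3 0 1 4 3]
  try simp only [neg_neg]

lemma m0301 : ev 0 * ev 3 * ev 0 * ev 1 = 0 := by
  rw [s2 0 3 0 1, z1 0 3 1]
  try simp only [neg_neg, neg_zero]

lemma m0303 : ev 0 * ev 3 * ev 0 * ev 3 = 0 := by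
  rw [s2 0 3 0 3, z1 0 3 3]
  try simp only [neg_neg, neg_zero]

lemma m0305 : ev 0 * ev 3 * ev 0 * ev 5 = 0 := by
  rw [s2 0 3 0 5, z1 0 3 5]
  try simp only [neg_neg, neg_zero]

lemma m0321 : ev 0 * ev 3 * ev 2 * ev 1 = -(ev 0 * ev 1 * ev 2 * ev 3) := by
  rw [s2 0 3 2 1, s3 0 2 3 1, s2 0 2 1 3]
  try simp only [neg_neg]

lemma m0323 : ev 0 * ev 3 * ev 2 * ev 3 = 0 := by
  rw [s2 0 3 2 3, z3 0 2 3]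
  try simp only [neg_neg, neg_zero]

lemma m0325 : ev 0 * ev 3 * ev 2 * ev 5 = -(ev 0 * ev 2 * ev 3 * ev 5) := by
  rw [s2 0 3 2 5]
  try simp only [neg_neg]

lemma m0341 : ev 0 * ev 3 * ev 4 * ev 1 = ev 0 * ev 1 * ev 3 * ev 4 := by
  rw [s3 0 3 4 1, s2 0 3 1 4]
  try simp only [neg_neg]

lemma m0343 : ev 0 * ev 3 * ev 4 * ev 3 = 0 := by
  rw [s3 0 3 4 3, z2 0 3 4]
  try simp only [neg_neg, neg_zero]

lemma m0501 : ev 0 * ev 5 * ev 0 * ev 1 = 0 := by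
  rw [s2 0 5 0 1, z1 0 5 1]
  try simp only [neg_neg, neg_zero]

lemma m0503 : ev 0 * ev 5 * ev 0 * ev 3 = 0 := by
  rw [s2 0 5 0 3, z1 0 5 3]
  try simp only [neg_neg, neg_zero]

lemma m0505 : ev 0 * ev 5 * ev 0 * ev 5 = 0 := by
  rw [s2 0 5 0 5, z1 0 5 5]
  try simp only [neg_neg, neg_zero]

lemma m0521 : ev 0 * ev 5 * ev 2 * ev 1 = -(ev 0 * ev 1 * ev 2 * ev 5) := by
  rw [s2 0 5 2 1, s3 0 2 5 1, s2 0 2 1 5]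
  try simp only [neg_neg]

lemma m0523 : ev 0 * ev 5 * ev 2 * ev 3 = ev 0 * ev 2 * ev 3 * ev 5 := by
  rw [s2 0 5 2 3, s3 0 2 5 3]
  try simp only [neg_neg]

lemma m0525 : ev 0 * ev 5 * ev 2 * ev 5 = 0 := by
  rw [s2 0 5 2 5, z3 0 2 5]
  try simp only [neg_neg, neg_zero]

lemma m0541 : ev 0 * ev 5 * ev 4 * ev 1 = -(ev 0 * ev 1 * ev 4 * ev 5) := by
  rw [s2 0 5 4 1, s3 0 4 5 1, s2 0 4 1 5]
  try simp only [neg_neg]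

lemma m0543 : ev 0 * ev 5 * ev 4 * ev 3 = -(ev 0 * ev 3 * ev 4 * ev 5) := by
  rw [s2 0 5 4 3, s3 0 4 5 3, s2 0 4 3 5]
  try simp only [neg_neg]

lemma m0545 : ev 0 * ev 5 * ev 4 * ev 5 = 0 := by
  rw [s2 0 5 4 5, z3 0 4 5]
  try simp only [neg_neg, neg_zero]

lemma m2101 : ev 2 * ev 1 * ev 0 * ev 1 = 0 := by
  rw [s1 2 1 0 1, s2 1 2 0 1, s1 1 0 2 1, s3 0 1 2 1, z2 0 1 2]
  try simp only [neg_neg, neg_zero]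

lemma m2103 : ev 2 * ev 1 * ev 0 * ev 3 = -(ev 0 * ev 1 * ev 2 * ev 3) := by
  rw [s1 2 1 0 3, s2 1 2 0 3, s1 1 0 2 3]
  try simp only [neg_neg]

lemma m2105 : ev 2 * ev 1 * ev 0 * ev 5 = -(ev 0 * ev 1 * ev 2 * ev 5) := by
  rw [s1 2 1 0 5, s2 1 2 0 5, s1 1 0 2 5]
  try simp only [neg_neg]

lemma m2121 : ev 2 * ev 1 * ev 2 * ev 1 = 0 := by
  rw [s1 2 1 2 1, z2 1 2 1]
  try simp only [neg_neg, neg_zero]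

lemma m2123 : ev 2 * ev 1 * ev 2 * ev 3 = 0 := by
  rw [s1 2 1 2 3, z2 1 2 3]
  try simp only [neg_neg, neg_zero]

lemma m2125 : ev 2 * ev 1 * ev 2 * ev 5 = 0 := by
  rw [s1 2 1 2 5, z2 1 2 5]
  try simp only [neg_neg, neg_zero]

lemma m2141 : ev 2 * ev 1 * ev 4 * ev 1 = 0 := by
  rw [s1 2 1 4 1, s3 1 2 4 1, s2 1 2 1 4, z1 1 2 4]
  try simp only [neg_neg, neg_zero]

lemma m2143 : ev 2 * ev 1 * ev 4 * ev 3 = ev 1 * ev 2 * ev 3 * ev 4 := by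
  rw [s1 2 1 4 3, s3 1 2 4 3]
  try simp only [neg_neg]

lemma m2145 : ev 2 * ev 1 * ev 4 * ev 5 = -(ev 1 * ev 2 * ev 4 * ev 5) := by
  rw [s1 2 1 4 5]
  try simp only [neg_neg]

lemma m2301 : ev 2 * ev 3 * ev 0 * ev 1 = ev 0 * ev 1 * ev 2 * ev 3 := by
  rw [s2 2 3 0 1, s1 2 0 3 1, s3 0 2 3 1, s2 0 2 1 3]
  try simp only [neg_neg]

lemma m2303 : ev 2 * ev 3 * ev 0 * ev 3 = 0 := by
  rw [s2 2 3 0 3, z3 2 0 3]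
  try simp only [neg_neg, neg_zero]

lemma m2305 : ev 2 * ev 3 * ev 0 * ev 5 = ev 0 * ev 2 * ev 3 * ev 5 := by
  rw [s2 2 3 0 5, s1 2 0 3 5]
  try simp only [neg_neg]

lemma m2321 : ev 2 * ev 3 * ev 2 * ev 1 = 0 := by
  rw [s2 2 3 2 1, z1 2 3 1]
  try simp only [neg_neg, neg_zero]

lemma m2323 : ev 2 * ev 3 * ev 2 * ev 3 = 0 := by
  rw [s2 2 3 2 3, z1 2 3 3]
  try simp only [neg_neg, neg_zero]

lemma m2325 : ev 2 * ev 3 * ev 2 * ev 5 = 0 := by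
  rw [s2 2 3 2 5, z1 2 3 5]
  try simp only [neg_neg, neg_zero]

lemma m2341 : ev 2 * ev 3 * ev 4 * ev 1 = -(ev 1 * ev 2 * ev 3 * ev 4) := by
  rw [s3 2 3 4 1, s2 2 3 1 4, s1 2 1 3 4]
  try simp only [neg_neg]

lemma m2343 : ev 2 * ev 3 * ev 4 * ev 3 = 0 := by
  rw [s3 2 3 4 3, z2 2 3 4]
  try simp only [neg_neg, neg_zero]

lemma m2501 : ev 2 * ev 5 * ev 0 * ev 1 = ev 0 * ev 1 * ev 2 * ev 5 := by
  rw [s2 2 5 0 1, s1 2 0 5 1, s3 0 2 5 1, s2 0 2 1 5]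
  try simp only [neg_neg]

lemma m2503 : ev 2 * ev 5 * ev 0 * ev 3 = -(ev 0 * ev 2 * ev 3 * ev 5) := by
  rw [s2 2 5 0 3, s1 2 0 5 3, s3 0 2 5 3]
  try simp only [neg_neg]

lemma m2505 : ev 2 * ev 5 * ev 0 * ev 5 = 0 := by
  rw [s2 2 5 0 5, z3 2 0 5]
  try simp only [neg_neg, neg_zero]

lemma m2521 : ev 2 * ev 5 * ev 2 * ev 1 = 0 := by
  rw [s2 2 5 2 1, z1 2 5 1]
  try simp only [neg_neg, neg_zero]

lemma m2523 : ev 2 * ev 5 * ev 2 * ev 3 = 0 := by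
  rw [s2 2 5 2 3, z1 2 5 3]
  try simp only [neg_neg, neg_zero]

lemma m2525 : ev 2 * ev 5 * ev 2 * ev 5 = 0 := by
  rw [s2 2 5 2 5, z1 2 5 5]
  try simp only [neg_neg, neg_zero]

lemma m2541 : ev 2 * ev 5 * ev 4 * ev 1 = ev 1 * ev 2 * ev 4 * ev 5 := by
  rw [s2 2 5 4 1, s3 2 4 5 1, s2 2 4 1 5, s1 2 1 4 5]
  try simp only [neg_neg]

lemma m2543 : ev 2 * ev 5 * ev 4 * ev 3 = -(ev 2 * ev 3 * ev 4 * ev 5) := by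
  rw [s2 2 5 4 3, s3 2 4 5 3, s2 2 4 3 5]
  try simp only [neg_neg]

lemma m2545 : ev 2 * ev 5 * ev 4 * ev 5 = 0 := by
  rw [s2 2 5 4 5, z3 2 4 5]
  try simp only [neg_neg, neg_zero]

lemma m4101 : ev 4 * ev 1 * ev 0 * ev 1 = 0 := by
  rw [s1 4 1 0 1, s2 1 4 0 1, s1 1 0 4 1, s3 0 1 4 1, z2 0 1 4]
  try simp only [neg_neg, neg_zero]

lemma m4103 : ev 4 * ev 1 * ev 0 * ev 3 = ev 0 * ev 1 * ev 3 * ev 4 := by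
  rw [s1 4 1 0 3, s2 1 4 0 3, s1 1 0 4 3, s3 0 1 4 3]
  try simp only [neg_neg]

lemma m4105 : ev 4 * ev 1 * ev 0 * ev 5 = -(ev 0 * ev 1 * ev 4 * ev 5) := by
  rw [s1 4 1 0 5, s2 1 4 0 5, s1 1 0 4 5]
  try simp only [neg_neg]

lemma m4121 : ev 4 * ev 1 * ev 2 * ev 1 = 0 := by
  rw [s1 4 1 2 1, s2 1 4 2 1, s3 1 2 4 1, s2 1 2 1 4, z1 1 2 4]
  try simp only [neg_neg, neg_zero]

lemma m4123 : ev 4 * ev 1 * ev 2 * ev 3 = -(ev 1 * ev 2 * ev 3 * ev 4) := by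
  rw [s1 4 1 2 3, s2 1 4 2 3, s3 1 2 4 3]
  try simp only [neg_neg]

lemma m4125 : ev 4 * ev 1 * ev 2 * ev 5 = ev 1 * ev 2 * ev 4 * ev 5 := by
  rw [s1 4 1 2 5, s2 1 4 2 5]
  try simp only [neg_neg]

lemma m4141 : ev 4 * ev 1 * ev 4 * ev 1 = 0 := by
  rw [s1 4 1 4 1, z2 1 4 1]
  try simp only [neg_neg, neg_zero]

lemma m4143 : ev 4 * ev 1 * ev 4 * ev 3 = 0 := by
  rw [s1 4 1 4 3, z2 1 4 3]
  try simp only [neg_neg, neg_zero]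

lemma m4145 : ev 4 * ev 1 * ev 4 * ev 5 = 0 := by
  rw [s1 4 1 4 5, z2 1 4 5]
  try simp only [neg_neg, neg_zero]

lemma m4301 : ev 4 * ev 3 * ev 0 * ev 1 = -(ev 0 * ev 1 * ev 3 * ev 4) := by
  rw [s1 4 3 0 1, s2 3 4 0 1, s1 3 0 4 1, s3 0 3 4 1, s2 0 3 1 4]
  try simp only [neg_neg]

lemma m4303 : ev 4 * ev 3 * ev 0 * ev 3 = 0 := by
  rw [s1 4 3 0 3, s2 3 4 0 3, s1 3 0 4 3, s3 0 3 4 3, z2 0 3 4]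
  try simp only [neg_neg, neg_zero]

lemma m4305 : ev 4 * ev 3 * ev 0 * ev 5 = -(ev 0 * ev 3 * ev 4 * ev 5) := by
  rw [s1 4 3 0 5, s2 3 4 0 5, s1 3 0 4 5]
  try simp only [neg_neg]

lemma m4321 : ev 4 * ev 3 * ev 2 * ev 1 = ev 1 * ev 2 * ev 3 * ev 4 := by
  rw [s1 4 3 2 1, s2 3 4 2 1, s1 3 2 4 1, s3 2 3 4 1, s2 2 3 1 4, s1 2 1 3 4]
  try simp only [neg_neg]

lemma m4323 : ev 4 * ev 3 * ev 2 * ev 3 = 0 := by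
  rw [s1 4 3 2 3, s2 3 4 2 3, s1 3 2 4 3, s3 2 3 4 3, z2 2 3 4]
  try simp only [neg_neg, neg_zero]

lemma m4325 : ev 4 * ev 3 * ev 2 * ev 5 = -(ev 2 * ev 3 * ev 4 * ev 5) := by
  rw [s1 4 3 2 5, s2 3 4 2 5, s1 3 2 4 5]
  try simp only [neg_neg]

lemma m4341 : ev 4 * ev 3 * ev 4 * ev 1 = 0 := by
  rw [s1 4 3 4 1, z2 3 4 1]
  try simp only [neg_neg, neg_zero]

lemma m4343 : ev 4 * ev 3 * ev 4 * ev 3 = 0 := by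
  rw [s1 4 3 4 3, z2 3 4 3]
  try simp only [neg_neg, neg_zero]

lemma m4345 : ev 4 * ev 3 * ev 4 * ev 5 = 0 := by
  rw [s1 4 3 4 5, z2 3 4 5]
  try simp only [neg_neg, neg_zero]

lemma m4501 : ev 4 * ev 5 * ev 0 * ev 1 = ev 0 * ev 1 * ev 4 * ev 5 := by
  rw [s2 4 5 0 1, s1 4 0 5 1, s3 0 4 5 1, s2 0 4 1 5]
  try simp only [neg_neg]

lemma m4503 : ev 4 * ev 5 * ev 0 * ev 3 = ev 0 * ev 3 * ev 4 * ev 5 := by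
  rw [s2 4 5 0 3, s1 4 0 5 3, s3 0 4 5 3, s2 0 4 3 5]
  try simp only [neg_neg]

lemma m4505 : ev 4 * ev 5 * ev 0 * ev 5 = 0 := by
  rw [s2 4 5 0 5, z3 4 0 5]
  try simp only [neg_neg, neg_zero]

lemma m4521 : ev 4 * ev 5 * ev 2 * ev 1 = -(ev 1 * ev 2 * ev 4 * ev 5) := by
  rw [s2 4 5 2 1, s1 4 2 5 1, s3 2 4 5 1, s2 2 4 1 5, s1 2 1 4 5]
  try simp only [neg_neg]

lemma m4523 : ev 4 * ev 5 * ev 2 * ev 3 = ev 2 * ev 3 * ev 4 * ev 5 := by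
  rw [s2 4 5 2 3, s1 4 2 5 3, s3 2 4 5 3, s2 2 4 3 5]
  try simp only [neg_neg]

lemma m4525 : ev 4 * ev 5 * ev 2 * ev 5 = 0 := by
  rw [s2 4 5 2 5, z3 4 2 5]
  try simp only [neg_neg, neg_zero]

lemma m4541 : ev 4 * ev 5 * ev 4 * ev 1 = 0 := by
  rw [s2 4 5 4 1, z1 4 5 1]
  try simp only [neg_neg, neg_zero]

lemma m4543 : ev 4 * ev 5 * ev 4 * ev 3 = 0 := by
  rw [s2 4 5 4 3, z1 4 5 3]
  try simp only [neg_neg, neg_zero]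

lemma m4545 : ev 4 * ev 5 * ev 4 * ev 5 = 0 := by
  rw [s2 4 5 4 5, z1 4 5 5]
  try simp only [neg_neg, neg_zero]


lemma det4 (M : Matrix (Fin 4) (Fin 4) ℂ) : M.det =
    M 0 0 * M 1 1 * M 2 2 * M 3 3 - M 0 0 * M 1 1 * M 2 3 * M 3 2 - M 0 0 * M 1 2 * M 2 1 * M 3 3 + M 0 0 * M 1 2 * M 2 3 * M 3 1 + M 0 0 * M 1 3 * M 2 1 * M 3 2 - M 0 0 * M 1 3 * M 2 2 * M 3 1 - M 0 1 * M 1 0 * M 2 2 * M 3 3 + M 0 1 * M 1 0 * M 2 3 * M 3 2 + M 0 1 * M 1 2 * M 2 0 * M 3 3 - M 0 1 * M 1 2 * M 2 3 * M 3 0 - M 0 1 * M 1 3 * M 2 0 * M 3 2 + M 0 1 * M 1 3 * M 2 2 * M 3 0 + M 0 2 * M 1 0 * M 2 1 * M 3 3 - M 0 2 * M 1 0 * M 2 3 * M 3 1 - M 0 2 * M 1 1 * M 2 0 * M 3 3 + M 0 2 * M 1 1 * M 2 3 * M 3 0 + M 0 2 * M 1 3 * M 2 0 * M 3 1 - M 0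 2 * M 1 3 * M 2 1 * M 3 0 - M 0 3 * M 1 0 * M 2 1 * M 3 2 + M 0 3 * M 1 0 * M 2 2 * M 3 1 + M 0 3 * M 1 1 * M 2 0 * M 3 2 - M 0 3 * M 1 1 * M 2 2 * M 3 0 - M 0 3 * M 1 2 * M 2 0 * M 3 1 + M 0 3 * M 1 2 * M 2 1 * M 3 0 := by
  rw [Matrix.det_succ_row_zero]
  simp [Fin.sum_univ_succ, Matrix.det_fin_three, Fin.succAbove]
  ring

def fS (S : Fin 4 → Fin 6) : V6 [⋀^Fin 4]→ₗ[ℂ] ℂ :=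
  (Matrix.detRowAlternating : (Fin 4 → ℂ) [⋀^Fin 4]→ₗ[ℂ] ℂ).compLinearMap
    (LinearMap.funLeft ℂ ℂ S)

def F (S : Fin 4 → Fin 6) : ExteriorAlgebra ℂ V6 →ₗ[ℂ] ℂ :=
  liftAlternating (Function.update (fun _ => 0) 4 (fS S))

lemma prod_eq_iMulti (i j k l : Fin 6) :
    ev i * ev j * ev k * ev l = ιMulti ℂ 4 ![e i, e j, e k, e l] := by
  rw [ιMulti_apply]
  simp [List.ofFn_succ, ev, mul_assoc]

lemma F_apply (S : Fin 4 → Fin 6) (i j k l : Fin 6) :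
    F S (ev i * ev j * ev k * ev l) =
      Matrix.det (Matrix.of fun r c => (![e i, e j, e k, e l] r) (S c)) := by
  rw [prod_eq_iMulti, F, liftAlternating_apply_ιMulti, Function.update_self]
  rfl

lemma FE0123_0123 : F ![0,1,2,3] (ev 0 * ev 1 * ev 2 * ev 3) = 1 := by
  rw [F_apply, det4]; simp [e, Pi.single_apply, Matrix.vecHead, Matrix.vecTail]

lemma FE0123_0125 : F ![0,1,2,3] (ev 0 * ev 1 * ev 2 * ev 5) = 0 := by
  rw [F_apply, det4]; simp [e, Pi.single_apply, Matrix.vecHead, Matrix.vecTail]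

lemma FE0123_0134 : F ![0,1,2,3] (ev 0 * ev 1 * ev 3 * ev 4) = 0 := by
  rw [F_apply, det4]; simp [e, Pi.single_apply, Matrix.vecHead, Matrix.vecTail]

lemma FE0123_0145 : F ![0,1,2,3] (ev 0 * ev 1 * ev 4 * ev 5) = 0 := by
  rw [F_apply, det4]; simp [e, Pi.single_apply, Matrix.vecHead, Matrix.vecTail]

lemma FE0123_0235 : F ![0,1,2,3] (ev 0 * ev 2 * ev 3 * ev 5) = 0 := by
  rw [F_apply, det4]; simp [e, Pi.single_apply, Matrix.vecHead, Matrix.vecTail]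

lemma FE0123_0345 : F ![0,1,2,3] (ev 0 * ev 3 * ev 4 * ev 5) = 0 := by
  rw [F_apply, det4]; simp [e, Pi.single_apply, Matrix.vecHead, Matrix.vecTail]

lemma FE0123_1234 : F ![0,1,2,3] (ev 1 * ev 2 * ev 3 * ev 4) = 0 := by
  rw [F_apply, det4]; simp [e, Pi.single_apply, Matrix.vecHead, Matrix.vecTail]

lemma FE0123_1245 : F ![0,1,2,3] (ev 1 * ev 2 * ev 4 * ev 5) = 0 := by
  rw [F_apply, det4]; simp [e, Pi.single_apply, Matrix.vecHead, Matrix.vecTail]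

lemma FE0123_2345 : F ![0,1,2,3] (ev 2 * ev 3 * ev 4 * ev 5) = 0 := by
  rw [F_apply, det4]; simp [e, Pi.single_apply, Matrix.vecHead, Matrix.vecTail]

lemma FE0125_0123 : F ![0,1,2,5] (ev 0 * ev 1 * ev 2 * ev 3) = 0 := by
  rw [F_apply, det4]; simp [e, Pi.single_apply, Matrix.vecHead, Matrix.vecTail]

lemma FE0125_0125 : F ![0,1,2,5] (ev 0 * ev 1 * ev 2 * ev 5) = 1 := by
  rw [F_apply, det4]; simp [e, Pi.single_apply, Matrix.vecHead, Matrix.vecTail]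

lemma FE0125_0134 : F ![0,1,2,5] (ev 0 * ev 1 * ev 3 * ev 4) = 0 := by
  rw [F_apply, det4]; simp [e, Pi.single_apply, Matrix.vecHead, Matrix.vecTail]

lemma FE0125_0145 : F ![0,1,2,5] (ev 0 * ev 1 * ev 4 * ev 5) = 0 := by
  rw [F_apply, det4]; simp [e, Pi.single_apply, Matrix.vecHead, Matrix.vecTail]

lemma FE0125_0235 : F ![0,1,2,5] (ev 0 * ev 2 * ev 3 * ev 5) = 0 := by
  rw [F_apply, det4]; simp [e, Pi.single_apply, Matrix.vecHead, Matrix.vecTail]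

lemma FE0125_0345 : F ![0,1,2,5] (ev 0 * ev 3 * ev 4 * ev 5) = 0 := by
  rw [F_apply, det4]; simp [e, Pi.single_apply, Matrix.vecHead, Matrix.vecTail]

lemma FE0125_1234 : F ![0,1,2,5] (ev 1 * ev 2 * ev 3 * ev 4) = 0 := by
  rw [F_apply, det4]; simp [e, Pi.single_apply, Matrix.vecHead, Matrix.vecTail]

lemma FE0125_1245 : F ![0,1,2,5] (ev 1 * ev 2 * ev 4 * ev 5) = 0 := by
  rw [F_apply, det4]; simp [e, Pi.single_apply, Matrix.vecHead, Matrix.vecTail]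

lemma FE0125_2345 : F ![0,1,2,5] (ev 2 * ev 3 * ev 4 * ev 5) = 0 := by
  rw [F_apply, det4]; simp [e, Pi.single_apply, Matrix.vecHead, Matrix.vecTail]

lemma FE0134_0123 : F ![0,1,3,4] (ev 0 * ev 1 * ev 2 * ev 3) = 0 := by
  rw [F_apply, det4]; simp [e, Pi.single_apply, Matrix.vecHead, Matrix.vecTail]

lemma FE0134_0125 : F ![0,1,3,4] (ev 0 * ev 1 * ev 2 * ev 5) = 0 := by
  rw [F_apply, det4]; simp [e, Pi.single_apply, Matrix.vecHead, Matrix.vecTail]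

lemma FE0134_0134 : F ![0,1,3,4] (ev 0 * ev 1 * ev 3 * ev 4) = 1 := by
  rw [F_apply, det4]; simp [e, Pi.single_apply, Matrix.vecHead, Matrix.vecTail]

lemma FE0134_0145 : F ![0,1,3,4] (ev 0 * ev 1 * ev 4 * ev 5) = 0 := by
  rw [F_apply, det4]; simp [e, Pi.single_apply, Matrix.vecHead, Matrix.vecTail]

lemma FE0134_0235 : F ![0,1,3,4] (ev 0 * ev 2 * ev 3 * ev 5) = 0 := by
  rw [F_apply, det4]; simp [e, Pi.single_apply, Matrix.vecHead, Matrix.vecTail]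

lemma FE0134_0345 : F ![0,1,3,4] (ev 0 * ev 3 * ev 4 * ev 5) = 0 := by
  rw [F_apply, det4]; simp [e, Pi.single_apply, Matrix.vecHead, Matrix.vecTail]

lemma FE0134_1234 : F ![0,1,3,4] (ev 1 * ev 2 * ev 3 * ev 4) = 0 := by
  rw [F_apply, det4]; simp [e, Pi.single_apply, Matrix.vecHead, Matrix.vecTail]

lemma FE0134_1245 : F ![0,1,3,4] (ev 1 * ev 2 * ev 4 * ev 5) = 0 := by
  rw [F_apply, det4]; simp [e, Pi.single_apply, Matrix.vecHead, Matrix.vecTail]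

lemma FE0134_2345 : F ![0,1,3,4] (ev 2 * ev 3 * ev 4 * ev 5) = 0 := by
  rw [F_apply, det4]; simp [e, Pi.single_apply, Matrix.vecHead, Matrix.vecTail]

lemma FE0145_0123 : F ![0,1,4,5] (ev 0 * ev 1 * ev 2 * ev 3) = 0 := by
  rw [F_apply, det4]; simp [e, Pi.single_apply, Matrix.vecHead, Matrix.vecTail]

lemma FE0145_0125 : F ![0,1,4,5] (ev 0 * ev 1 * ev 2 * ev 5) = 0 := by
  rw [F_apply, det4]; simp [e, Pi.single_apply, Matrix.vecHead, Matrix.vecTail]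

lemma FE0145_0134 : F ![0,1,4,5] (ev 0 * ev 1 * ev 3 * ev 4) = 0 := by
  rw [F_apply, det4]; simp [e, Pi.single_apply, Matrix.vecHead, Matrix.vecTail]

lemma FE0145_0145 : F ![0,1,4,5] (ev 0 * ev 1 * ev 4 * ev 5) = 1 := by
  rw [F_apply, det4]; simp [e, Pi.single_apply, Matrix.vecHead, Matrix.vecTail]

lemma FE0145_0235 : F ![0,1,4,5] (ev 0 * ev 2 * ev 3 * ev 5) = 0 := by
  rw [F_apply, det4]; simp [e, Pi.single_apply, Matrix.vecHead, Matrix.vecTail]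

lemma FE0145_0345 : F ![0,1,4,5] (ev 0 * ev 3 * ev 4 * ev 5) = 0 := by
  rw [F_apply, det4]; simp [e, Pi.single_apply, Matrix.vecHead, Matrix.vecTail]

lemma FE0145_1234 : F ![0,1,4,5] (ev 1 * ev 2 * ev 3 * ev 4) = 0 := by
  rw [F_apply, det4]; simp [e, Pi.single_apply, Matrix.vecHead, Matrix.vecTail]

lemma FE0145_1245 : F ![0,1,4,5] (ev 1 * ev 2 * ev 4 * ev 5) = 0 := by
  rw [F_apply, det4]; simp [e, Pi.single_apply, Matrix.vecHead, Matrix.vecTail]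

lemma FE0145_2345 : F ![0,1,4,5] (ev 2 * ev 3 * ev 4 * ev 5) = 0 := by
  rw [F_apply, det4]; simp [e, Pi.single_apply, Matrix.vecHead, Matrix.vecTail]

lemma FE0235_0123 : F ![0,2,3,5] (ev 0 * ev 1 * ev 2 * ev 3) = 0 := by
  rw [F_apply, det4]; simp [e, Pi.single_apply, Matrix.vecHead, Matrix.vecTail]

lemma FE0235_0125 : F ![0,2,3,5] (ev 0 * ev 1 * ev 2 * ev 5) = 0 := by
  rw [F_apply, det4]; simp [e, Pi.single_apply, Matrix.vecHead, Matrix.vecTail]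

lemma FE0235_0134 : F ![0,2,3,5] (ev 0 * ev 1 * ev 3 * ev 4) = 0 := by
  rw [F_apply, det4]; simp [e, Pi.single_apply, Matrix.vecHead, Matrix.vecTail]

lemma FE0235_0145 : F ![0,2,3,5] (ev 0 * ev 1 * ev 4 * ev 5) = 0 := by
  rw [F_apply, det4]; simp [e, Pi.single_apply, Matrix.vecHead, Matrix.vecTail]

lemma FE0235_0235 : F ![0,2,3,5] (ev 0 * ev 2 * ev 3 * ev 5) = 1 := by
  rw [F_apply, det4]; simp [e, Pi.single_apply, Matrix.vecHead, Matrix.vecTail]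

lemma FE0235_0345 : F ![0,2,3,5] (ev 0 * ev 3 * ev 4 * ev 5) = 0 := by
  rw [F_apply, det4]; simp [e, Pi.single_apply, Matrix.vecHead, Matrix.vecTail]

lemma FE0235_1234 : F ![0,2,3,5] (ev 1 * ev 2 * ev 3 * ev 4) = 0 := by
  rw [F_apply, det4]; simp [e, Pi.single_apply, Matrix.vecHead, Matrix.vecTail]

lemma FE0235_1245 : F ![0,2,3,5] (ev 1 * ev 2 * ev 4 * ev 5) = 0 := by
  rw [F_apply, det4]; simp [e, Pi.single_apply, Matrix.vecHead, Matrix.vecTail]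

lemma FE0235_2345 : F ![0,2,3,5] (ev 2 * ev 3 * ev 4 * ev 5) = 0 := by
  rw [F_apply, det4]; simp [e, Pi.single_apply, Matrix.vecHead, Matrix.vecTail]

lemma FE0345_0123 : F ![0,3,4,5] (ev 0 * ev 1 * ev 2 * ev 3) = 0 := by
  rw [F_apply, det4]; simp [e, Pi.single_apply, Matrix.vecHead, Matrix.vecTail]

lemma FE0345_0125 : F ![0,3,4,5] (ev 0 * ev 1 * ev 2 * ev 5) = 0 := by
  rw [F_apply, det4]; simp [e, Pi.single_apply, Matrix.vecHead, Matrix.vecTail]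

lemma FE0345_0134 : F ![0,3,4,5] (ev 0 * ev 1 * ev 3 * ev 4) = 0 := by
  rw [F_apply, det4]; simp [e, Pi.single_apply, Matrix.vecHead, Matrix.vecTail]

lemma FE0345_0145 : F ![0,3,4,5] (ev 0 * ev 1 * ev 4 * ev 5) = 0 := by
  rw [F_apply, det4]; simp [e, Pi.single_apply, Matrix.vecHead, Matrix.vecTail]

lemma FE0345_0235 : F ![0,3,4,5] (ev 0 * ev 2 * ev 3 * ev 5) = 0 := by
  rw [F_apply, det4]; simp [e, Pi.single_apply, Matrix.vecHead, Matrix.vecTail]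

lemma FE0345_0345 : F ![0,3,4,5] (ev 0 * ev 3 * ev 4 * ev 5) = 1 := by
  rw [F_apply, det4]; simp [e, Pi.single_apply, Matrix.vecHead, Matrix.vecTail]

lemma FE0345_1234 : F ![0,3,4,5] (ev 1 * ev 2 * ev 3 * ev 4) = 0 := by
  rw [F_apply, det4]; simp [e, Pi.single_apply, Matrix.vecHead, Matrix.vecTail]

lemma FE0345_1245 : F ![0,3,4,5] (ev 1 * ev 2 * ev 4 * ev 5) = 0 := by
  rw [F_apply, det4]; simp [e, Pi.single_apply, Matrix.vecHead, Matrix.vecTail]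

lemma FE0345_2345 : F ![0,3,4,5] (ev 2 * ev 3 * ev 4 * ev 5) = 0 := by
  rw [F_apply, det4]; simp [e, Pi.single_apply, Matrix.vecHead, Matrix.vecTail]

lemma FE1234_0123 : F ![1,2,3,4] (ev 0 * ev 1 * ev 2 * ev 3) = 0 := by
  rw [F_apply, det4]; simp [e, Pi.single_apply, Matrix.vecHead, Matrix.vecTail]

lemma FE1234_0125 : F ![1,2,3,4] (ev 0 * ev 1 * ev 2 * ev 5) = 0 := by
  rw [F_apply, det4]; simp [e, Pi.single_apply, Matrix.vecHead, Matrix.vecTail]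

lemma FE1234_0134 : F ![1,2,3,4] (ev 0 * ev 1 * ev 3 * ev 4) = 0 := by
  rw [F_apply, det4]; simp [e, Pi.single_apply, Matrix.vecHead, Matrix.vecTail]

lemma FE1234_0145 : F ![1,2,3,4] (ev 0 * ev 1 * ev 4 * ev 5) = 0 := by
  rw [F_apply, det4]; simp [e, Pi.single_apply, Matrix.vecHead, Matrix.vecTail]

lemma FE1234_0235 : F ![1,2,3,4] (ev 0 * ev 2 * ev 3 * ev 5) = 0 := by
  rw [F_apply, det4]; simp [e, Pi.single_apply, Matrix.vecHead, Matrix.vecTail]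

lemma FE1234_0345 : F ![1,2,3,4] (ev 0 * ev 3 * ev 4 * ev 5) = 0 := by
  rw [F_apply, det4]; simp [e, Pi.single_apply, Matrix.vecHead, Matrix.vecTail]

lemma FE1234_1234 : F ![1,2,3,4] (ev 1 * ev 2 * ev 3 * ev 4) = 1 := by
  rw [F_apply, det4]; simp [e, Pi.single_apply, Matrix.vecHead, Matrix.vecTail]

lemma FE1234_1245 : F ![1,2,3,4] (ev 1 * ev 2 * ev 4 * ev 5) = 0 := by
  rw [F_apply, det4]; simp [e, Pi.single_apply, Matrix.vecHead, Matrix.vecTail]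

lemma FE1234_2345 : F ![1,2,3,4] (ev 2 * ev 3 * ev 4 * ev 5) = 0 := by
  rw [F_apply, det4]; simp [e, Pi.single_apply, Matrix.vecHead, Matrix.vecTail]

lemma FE1245_0123 : F ![1,2,4,5] (ev 0 * ev 1 * ev 2 * ev 3) = 0 := by
  rw [F_apply, det4]; simp [e, Pi.single_apply, Matrix.vecHead, Matrix.vecTail]

lemma FE1245_0125 : F ![1,2,4,5] (ev 0 * ev 1 * ev 2 * ev 5) = 0 := by
  rw [F_apply, det4]; simp [e, Pi.single_apply, Matrix.vecHead, Matrix.vecTail]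

lemma FE1245_0134 : F ![1,2,4,5] (ev 0 * ev 1 * ev 3 * ev 4) = 0 := by
  rw [F_apply, det4]; simp [e, Pi.single_apply, Matrix.vecHead, Matrix.vecTail]

lemma FE1245_0145 : F ![1,2,4,5] (ev 0 * ev 1 * ev 4 * ev 5) = 0 := by
  rw [F_apply, det4]; simp [e, Pi.single_apply, Matrix.vecHead, Matrix.vecTail]

lemma FE1245_0235 : F ![1,2,4,5] (ev 0 * ev 2 * ev 3 * ev 5) = 0 := by
  rw [F_apply, det4]; simp [e, Pi.single_apply, Matrix.vecHead, Matrix.vecTail]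

lemma FE1245_0345 : F ![1,2,4,5] (ev 0 * ev 3 * ev 4 * ev 5) = 0 := by
  rw [F_apply, det4]; simp [e, Pi.single_apply, Matrix.vecHead, Matrix.vecTail]

lemma FE1245_1234 : F ![1,2,4,5] (ev 1 * ev 2 * ev 3 * ev 4) = 0 := by
  rw [F_apply, det4]; simp [e, Pi.single_apply, Matrix.vecHead, Matrix.vecTail]

lemma FE1245_1245 : F ![1,2,4,5] (ev 1 * ev 2 * ev 4 * ev 5) = 1 := by
  rw [F_apply, det4]; simp [e, Pi.single_apply, Matrix.vecHead, Matrix.vecTail]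

lemma FE1245_2345 : F ![1,2,4,5] (ev 2 * ev 3 * ev 4 * ev 5) = 0 := by
  rw [F_apply, det4]; simp [e, Pi.single_apply, Matrix.vecHead, Matrix.vecTail]

lemma FE2345_0123 : F ![2,3,4,5] (ev 0 * ev 1 * ev 2 * ev 3) = 0 := by
  rw [F_apply, det4]; simp [e, Pi.single_apply, Matrix.vecHead, Matrix.vecTail]

lemma FE2345_0125 : F ![2,3,4,5] (ev 0 * ev 1 * ev 2 * ev 5) = 0 := by
  rw [F_apply, det4]; simp [e, Pi.single_apply, Matrix.vecHead, Matrix.vecTail]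

lemma FE2345_0134 : F ![2,3,4,5] (ev 0 * ev 1 * ev 3 * ev 4) = 0 := by
  rw [F_apply, det4]; simp [e, Pi.single_apply, Matrix.vecHead, Matrix.vecTail]

lemma FE2345_0145 : F ![2,3,4,5] (ev 0 * ev 1 * ev 4 * ev 5) = 0 := by
  rw [F_apply, det4]; simp [e, Pi.single_apply, Matrix.vecHead, Matrix.vecTail]

lemma FE2345_0235 : F ![2,3,4,5] (ev 0 * ev 2 * ev 3 * ev 5) = 0 := by
  rw [F_apply, det4]; simp [e, Pi.single_apply, Matrix.vecHead, Matrix.vecTail]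

lemma FE2345_0345 : F ![2,3,4,5] (ev 0 * ev 3 * ev 4 * ev 5) = 0 := by
  rw [F_apply, det4]; simp [e, Pi.single_apply, Matrix.vecHead, Matrix.vecTail]

lemma FE2345_1234 : F ![2,3,4,5] (ev 1 * ev 2 * ev 3 * ev 4) = 0 := by
  rw [F_apply, det4]; simp [e, Pi.single_apply, Matrix.vecHead, Matrix.vecTail]

lemma FE2345_1245 : F ![2,3,4,5] (ev 1 * ev 2 * ev 4 * ev 5) = 0 := by
  rw [F_apply, det4]; simp [e, Pi.single_apply, Matrix.vecHead, Matrix.vecTail]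

lemma FE2345_2345 : F ![2,3,4,5] (ev 2 * ev 3 * ev 4 * ev 5) = 1 := by
  rw [F_apply, det4]; simp [e, Pi.single_apply, Matrix.vecHead, Matrix.vecTail]


set_option maxHeartbeats 2000000 in
lemma master (a b c : ℂ) (ω : Fin 3 → ExteriorAlgebra ℂ V6)
    (h₁ : ω 0 = a • (ev 0 * ev 1) + b • (ev 2 * ev 5) + c • (ev 4 * ev 3))
    (h₂ : ω 1 = a • (ev 2 * ev 3) + b • (ev 4 * ev 1) + c • (ev 0 * ev 5))
    (h₃ : ω 2 = a • (ev 4 * ev 5) + b • (ev 0 * ev 3) + c • (ev 2 * ev 1))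
    (q : Fin 3 → Fin 3 → ℂ) :
    (∑ i, ∑ j, q i j • (ω i * ω j)) =
      (q 0 1 * (a * a) + q 1 0 * (a * a) - 2 * q 2 2 * (b * c)) • (ev 0 * ev 1 * ev 2 * ev 3)
    + (2 * q 0 0 * (a * b) - q 1 2 * (c * c) - q 2 1 * (c * c)) • (ev 0 * ev 1 * ev 2 * ev 5)
    + (q 1 2 * (b * b) + q 2 1 * (b * b) - 2 * q 0 0 * (a * c)) • (ev 0 * ev 1 * ev 3 * ev 4)
    + (q 0 2 * (a * a) + q 2 0 * (a * a) - 2 * q 1 1 * (b * c)) • (ev 0 * ev 1 * ev 4 * ev 5)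
    + (2 * q 1 1 * (a * c) - q 0 2 * (b * b) - q 2 0 * (b * b)) • (ev 0 * ev 2 * ev 3 * ev 5)
    + (2 * q 2 2 * (a * b) - q 0 1 * (c * c) - q 1 0 * (c * c)) • (ev 0 * ev 3 * ev 4 * ev 5)
    + (q 0 2 * (c * c) + q 2 0 * (c * c) - 2 * q 1 1 * (a * b)) • (ev 1 * ev 2 * ev 3 * ev 4)
    + (q 0 1 * (b * b) + q 1 0 * (b * b) - 2 * q 2 2 * (a * c)) • (ev 1 * ev 2 * ev 4 * ev 5)
    + (q 1 2 * (a * a) + q 2 1 * (a * a) - 2 * q 0 0 * (b * c)) • (ev 2 * ev 3 * ev 4 * ev 5) := by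
  simp only [Fin.sum_univ_three, h₁, h₂, h₃]
  simp only [mul_add, add_mul, smul_add]
  simp only [smul_mul_assoc, mul_smul_comm, smul_smul]
  simp only [← mul_assoc]
  simp only [m0101, m0103, m0105, m0121, m0141, m0143, m0301, m0303, m0305, m0321, m0323, m0325, m0341, m0343, m0501, m0503, m0505, m0521, m0523, m0525, m0541, m0543, m0545, m2101, m2103, m2105, m2121, m2123, m2125, m2141, m2143, m2145, m2301, m2303, m2305, m2321, m2323, m2325, m2341, m2343, m2501, m2503, m2505, m2521, m2523, m2525, m2541, m2543, m2545, m4101, m4103, m4105, m4121, m4123, m4125, m4141, m4143, m4145, m4301, m4303, m4305, m4321, m4323, m4325, m4341, m4343, m4345, m4501, m4503, m4505, m4521, m4523, m4525, m4541, m4543, m4545,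
    smul_zero, smul_neg, add_zero, zero_add]
  module

lemma key (a b c x y : ℂ)
    (hnp : ¬ (∃ t : ℂ, (![a^2, b^2, c^2] = t • ![b*c, a*c, a*b]) ∨
                (![b*c, a*c, a*b] = t • ![a^2, b^2, c^2])))
    (h1 : x * a^2 = y * (b*c)) (h2 : x * b^2 = y * (a*c)) (h3 : x * c^2 = y * (a*b)) :
    x = 0 ∧ y = 0 := by
  rcases eq_or_ne x 0 with hx | hx
  · subst hx
    refine ⟨rfl, ?_⟩
    by_contra hy
    apply hnp
    refine ⟨0, Or.inr ?_⟩
    have hbc : b * c = 0 := by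
      have : y * (b*c) = 0 := by linear_combination -h1
      exact (mul_eq_zero.mp this).resolve_left hy
    have hac : a * c = 0 := by
      have : y * (a*c) = 0 := by linear_combination -h2
      exact (mul_eq_zero.mp this).resolve_left hy
    have hab : a * b = 0 := by
      have : y * (a*b) = 0 := by linear_combination -h3
      exact (mul_eq_zero.mp this).resolve_left hy
    funext i
    fin_cases i <;> simp [hbc, hac, hab]
  · exfalso
    apply hnp
    refine ⟨y / x, Or.inl ?_⟩
    funext i
    fin_cases i <;>
      simp only [Matrix.cons_val_zero, Matrix.cons_val_one, Matrix.head_cons, Pi.smul_apply,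
        smul_eq_mul, Matrix.cons_val_two, Matrix.tail_cons, Fin.isValue, Fin.zero_eta, Fin.mk_one, Fin.reduceFinMk] <;>
      field_simp
    · linear_combination h1
    · linear_combination h2
    · linear_combination h3

set_option maxHeartbeats 4000000 in
/-- For ω₁ = a·e₁∧e₂ + b·e₃∧e₆ + c·e₅∧e₄, ω₂ = a·e₃∧e₄ + b·e₅∧e₂ + c·e₁∧e₆,
ω₃ = a·e₅∧e₆ + b·e₁∧e₄ + c·e₃∧e₂ (indices shifted to 0–5), assumed linearly
independent, the wedge map Sym²⟨ω₁,ω₂,ω₃⟩ → ⋀⁴V₆ is injective if and only if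
(a²,b²,c²) and (bc,ac,ab) are not proportional. -/
theorem semisimple_injectivity (a b c : ℂ)
    (ω : Fin 3 → ExteriorAlgebra ℂ V6)
    (h₁ : ω 0 = a • (ev 0 * ev 1) + b • (ev 2 * ev 5) + c • (ev 4 * ev 3))
    (h₂ : ω 1 = a • (ev 2 * ev 3) + b • (ev 4 * ev 1) + c • (ev 0 * ev 5))
    (h₃ : ω 2 = a • (ev 4 * ev 5) + b • (ev 0 * ev 3) + c • (ev 2 * ev 1))
    (hind : LinearIndependent ℂ ω) :
    (∀ q : Fin 3 → Fin 3 → ℂ, (∀ i j, q i j = q j i) →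
        (∑ i, ∑ j, q i j • (ω i * ω j)) = 0 → q = 0) ↔
    ¬ (∃ t : ℂ, (![a^2, b^2, c^2] = t • ![b*c, a*c, a*b]) ∨
                (![b*c, a*c, a*b] = t • ![a^2, b^2, c^2])) := by
  constructor
  · intro hinj
    rintro ⟨t, ht | ht⟩
    · have e1 : a^2 = t * (b*c) := by simpa using congrFun ht 0
      have e2 : b^2 = t * (a*c) := by simpa using congrFun ht 1
      have e3 : c^2 = t * (a*b) := by simpa using congrFun ht 2
      set q : Fin 3 → Fin 3 → ℂ := fun i j => if i = j then t else 1 with hqdef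
      have hsym : ∀ i j, q i j = q j i := by
        intro i j
        by_cases h : i = j
        · simp [hqdef, h]
        · simp [hqdef, h, Ne.symm h]
      have hz : (∑ i, ∑ j, q i j • (ω i * ω j)) = 0 := by
        rw [master a b c ω h₁ h₂ h₃ q]
        have hq01 : q 0 1 = 1 := by simp [hqdef]
        have hq10 : q 1 0 = 1 := by simp [hqdef]
        have hq02 : q 0 2 = 1 := by simp [hqdef]
        have hq20 : q 2 0 = 1 := by simp [hqdef]
        have hq12 : q 1 2 = 1 := by simp [hqdef]
        have hq21 : q 2 1 = 1 := by simp [hqdef]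
        have hq00 : q 0 0 = t := by simp [hqdef]
        have hq11 : q 1 1 = t := by simp [hqdef]
        have hq22 : q 2 2 = t := by simp [hqdef]
        rw [hq01, hq10, hq02, hq20, hq12, hq21, hq00, hq11, hq22]
        rw [show (1 * (a * a) + 1 * (a * a) - 2 * t * (b * c)) = 0 by linear_combination 2 * e1]
        rw [show (2 * t * (a * b) - 1 * (c * c) - 1 * (c * c)) = 0 by linear_combination -2 * e3]
        rw [show (1 * (b * b) + 1 * (b * b) - 2 * t * (a * c)) = 0 by linear_combination 2 * e2]
        rw [show (2 * t * (a * c) - 1 * (b * b) - 1 * (b * b)) = 0 by linear_combination -2 * e2]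
        rw [show (1 * (c * c) + 1 * (c * c) - 2 * t * (a * b)) = 0 by linear_combination 2 * e3]
        simp
      have := hinj q hsym hz
      have h01 : q 0 1 = 0 := by rw [this]; rfl
      rw [hqdef] at h01
      simp at h01
    · have e1 : b*c = t * a^2 := by simpa using congrFun ht 0
      have e2 : a*c = t * b^2 := by simpa using congrFun ht 1
      have e3 : a*b = t * c^2 := by simpa using congrFun ht 2
      set q : Fin 3 → Fin 3 → ℂ := fun i j => if i = j then 1 else t with hqdef
      have hsym : ∀ i j, q i j = q j i := by
        intro i j
        by_cases h : i = j
        · simp [hqdef, h]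
        · simp [hqdef, h, Ne.symm h]
      have hz : (∑ i, ∑ j, q i j • (ω i * ω j)) = 0 := by
        rw [master a b c ω h₁ h₂ h₃ q]
        have hq01 : q 0 1 = t := by simp [hqdef]
        have hq10 : q 1 0 = t := by simp [hqdef]
        have hq02 : q 0 2 = t := by simp [hqdef]
        have hq20 : q 2 0 = t := by simp [hqdef]
        have hq12 : q 1 2 = t := by simp [hqdef]
        have hq21 : q 2 1 = t := by simp [hqdef]
        have hq00 : q 0 0 = 1 := by simp [hqdef]
        have hq11 : q 1 1 = 1 := by simp [hqdef]
        have hq22 : q 2 2 = 1 := by simp [hqdef]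
        rw [hq01, hq10, hq02, hq20, hq12, hq21, hq00, hq11, hq22]
        rw [show (t * (a * a) + t * (a * a) - 2 * 1 * (b * c)) = 0 by linear_combination -2 * e1]
        rw [show (2 * 1 * (a * b) - t * (c * c) - t * (c * c)) = 0 by linear_combination 2 * e3]
        rw [show (t * (b * b) + t * (b * b) - 2 * 1 * (a * c)) = 0 by linear_combination -2 * e2]
        rw [show (2 * 1 * (a * c) - t * (b * b) - t * (b * b)) = 0 by linear_combination 2 * e2]
        rw [show (t * (c * c) + t * (c * c) - 2 * 1 * (a * b)) = 0 by linear_combination -2 * e3]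
        simp
      have := hinj q hsym hz
      have h00 : q 0 0 = 0 := by rw [this]; rfl
      rw [hqdef] at h00
      simp at h00
  · intro hnp q hsym hq
    rw [master a b c ω h₁ h₂ h₃ q] at hq
    have eq0 := congrArg (F ![0,1,2,3]) hq
    simp only [map_add, map_smul, map_zero, FE0123_0123, FE0123_0125, FE0123_0134, FE0123_0145, FE0123_0235, FE0123_0345, FE0123_1234, FE0123_1245, FE0123_2345,
      smul_eq_mul, mul_one, mul_zero, add_zero, zero_add] at eq0
    have eq1 := congrArg (F ![0,1,2,5]) hq
    simp only [map_add, map_smul, map_zero, FE0125_0123, FE0125_0125, FE0125_0134, FE0125_0145, FE0125_0235, FE0125_0345, FE0125_1234, FE0125_1245, FE0125_2345,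
      smul_eq_mul, mul_one, mul_zero, add_zero, zero_add] at eq1
    have eq2 := congrArg (F ![0,1,3,4]) hq
    simp only [map_add, map_smul, map_zero, FE0134_0123, FE0134_0125, FE0134_0134, FE0134_0145, FE0134_0235, FE0134_0345, FE0134_1234, FE0134_1245, FE0134_2345,
      smul_eq_mul, mul_one, mul_zero, add_zero, zero_add] at eq2
    have eq3 := congrArg (F ![0,1,4,5]) hq
    simp only [map_add, map_smul, map_zero, FE0145_0123, FE0145_0125, FE0145_0134, FE0145_0145, FE0145_0235, FE0145_0345, FE0145_1234, FE0145_1245, FE0145_2345,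
      smul_eq_mul, mul_one, mul_zero, add_zero, zero_add] at eq3
    have eq4 := congrArg (F ![0,2,3,5]) hq
    simp only [map_add, map_smul, map_zero, FE0235_0123, FE0235_0125, FE0235_0134, FE0235_0145, FE0235_0235, FE0235_0345, FE0235_1234, FE0235_1245, FE0235_2345,
      smul_eq_mul, mul_one, mul_zero, add_zero, zero_add] at eq4
    have eq5 := congrArg (F ![0,3,4,5]) hq
    simp only [map_add, map_smul, map_zero, FE0345_0123, FE0345_0125, FE0345_0134, FE0345_0145, FE0345_0235, FE0345_0345, FE0345_1234, FE0345_1245, FE0345_2345,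
      smul_eq_mul, mul_one, mul_zero, add_zero, zero_add] at eq5
    have eq6 := congrArg (F ![1,2,3,4]) hq
    simp only [map_add, map_smul, map_zero, FE1234_0123, FE1234_0125, FE1234_0134, FE1234_0145, FE1234_0235, FE1234_0345, FE1234_1234, FE1234_1245, FE1234_2345,
      smul_eq_mul, mul_one, mul_zero, add_zero, zero_add] at eq6
    have eq7 := congrArg (F ![1,2,4,5]) hq
    simp only [map_add, map_smul, map_zero, FE1245_0123, FE1245_0125, FE1245_0134, FE1245_0145, FE1245_0235, FE1245_0345, FE1245_1234, FE1245_1245, FE1245_2345,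
      smul_eq_mul, mul_one, mul_zero, add_zero, zero_add] at eq7
    have eq8 := congrArg (F ![2,3,4,5]) hq
    simp only [map_add, map_smul, map_zero, FE2345_0123, FE2345_0125, FE2345_0134, FE2345_0145, FE2345_0235, FE2345_0345, FE2345_1234, FE2345_1245, FE2345_2345,
      smul_eq_mul, mul_one, mul_zero, add_zero, zero_add] at eq8
    obtain ⟨hq01, hq22⟩ := key a b c (q 0 1) (q 2 2) hnp
      (by linear_combination eq0/2 + (a*a)/2 * (hsym 0 1))
      (by linear_combination eq7/2 + (b*b)/2 * (hsym 0 1))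
      (by linear_combination -eq5/2 + (c*c)/2 * (hsym 0 1))
    obtain ⟨hq02, hq11⟩ := key a b c (q 0 2) (q 1 1) hnp
      (by linear_combination eq3/2 + (a*a)/2 * (hsym 0 2))
      (by linear_combination -eq4/2 + (b*b)/2 * (hsym 0 2))
      (by linear_combination eq6/2 + (c*c)/2 * (hsym 0 2))
    obtain ⟨hq12, hq00⟩ := key a b c (q 1 2) (q 0 0) hnp
      (by linear_combination eq8/2 + (a*a)/2 * (hsym 1 2))
      (by linear_combination eq2/2 + (b*b)/2 * (hsym 1 2))
      (by linear_combination -eq1/2 + (c*c)/2 * (hsym 1 2))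
    funext i j
    fin_cases i <;> fin_cases j <;>
      simp only [Pi.zero_apply]
    · exact hq00
    · exact hq01
    · exact hq02
    · exact (hsym 1 0).trans hq01
    · exact hq11
    · exact hq12
    · exact (hsym 2 0).trans hq02
    · exact (hsym 2 1).trans hq12
    · exact hq22
end
end

section
/- Let H ⊆ ⋀²V₆ be 4-dimensional, ω₀ ∈ H with ω₀∧ω₀∧ω₀ = 0 and ω₀∧ω₀ ≠ 0 (rank 4), and suppose ω₀∧ω₀∧ω = 0 for all ω ∈ H. Let V₄ ⊆ V₆ be the unique 4-dimensional subspace with ω₀ ∈ ⋀²V₄. Then H ⊆ V₄∧V₆ (the subspace of ⋀²V₆ spanned by wedges v∧w with v ∈ V₄, w ∈ V₆). -/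
open ExteriorAlgebra
open scoped Pointwise

section Aux

variable {V : Type*} [AddCommGroup V] [Module ℂ V]

theorem cs_alt_eq_det_smul {R M N ι : Type*} [CommRing R] [AddCommGroup M] [Module R M]
    [AddCommGroup N] [Module R N] [Fintype ι] [DecidableEq ι]
    (e : Module.Basis ι R M) (f : M [⋀^ι]→ₗ[R] N) (v : ι → M) :
    f v = e.det v • f e := by
  have : f = (LinearMap.toSpanSingleton R N (f e)).compAlternatingMap e.det := by
    refine Module.Basis.ext_alternating e fun i h => ?_
    let σ : Equiv.Perm ι := Equiv.ofBijective i (Finite.injective_iff_bijective.1 h)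
    have h1 : (fun j => e (i j)) = e ∘ σ := rfl
    rw [h1, AlternatingMap.map_perm, AlternatingMap.map_perm]
    simp [Module.Basis.det_self]
  rw [this]
  simp [LinearMap.toSpanSingleton, Module.Basis.det_self]

theorem cs_shape4 (v : Fin 4 → V) :
    ιMulti ℂ 4 v = ι ℂ (v 0) * (ι ℂ (v 1) * (ι ℂ (v 2) * ι ℂ (v 3))) := by
  simp [ιMulti_apply, List.ofFn_succ, Matrix.vecTail]

theorem cs_shape6 (v : Fin 6 → V) : ιMulti ℂ 6 v =
    ι ℂ (v 0) * (ι ℂ (v 1) * (ι ℂ (v 2) * (ι ℂ (v 3) * (ι ℂ (v 4) * ι ℂ (v 5))))) := by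
  simp [ιMulti_apply, List.ofFn_succ, Matrix.vecTail]

theorem cs_sw (y z : V) : ι ℂ y * ι ℂ z = -(ι ℂ z * ι ℂ y) :=
  eq_neg_of_add_eq_zero_left (ι_add_mul_swap y z)

theorem cs_sw' (y z : V) (w : ExteriorAlgebra ℂ V) :
    ι ℂ y * (ι ℂ z * w) = -(ι ℂ z * (ι ℂ y * w)) := by
  rw [← mul_assoc, cs_sw y z, neg_mul, mul_assoc]

theorem cs_comm4 (a b c d x : V) :
    (ι ℂ a * (ι ℂ b * (ι ℂ c * ι ℂ d))) * ι ℂ x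
      = ι ℂ x * (ι ℂ a * (ι ℂ b * (ι ℂ c * ι ℂ d))) := by
  simp only [mul_assoc]
  rw [cs_sw d x]; simp only [mul_neg]
  rw [cs_sw' c x]; simp only [mul_neg, neg_neg]
  rw [cs_sw' b x]; simp only [mul_neg, neg_neg]
  rw [cs_sw' a x]; simp only [mul_neg, neg_neg]

set_option maxRecDepth 100000 in
theorem cs_T6_ne_zero [FiniteDimensional ℂ V] (b6 : Module.Basis (Fin 6) ℂ V) :
    ιMulti ℂ 6 (fun i => b6 i) ≠ 0 := by
  intro h
  have := congrArg
    (liftAlternating (Function.update (fun i => (0 : V [⋀^Fin i]→ₗ[ℂ] ℂ)) 6 b6.det)) h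
  rw [liftAlternating_apply_ιMulti, map_zero, Function.update_self] at this
  simp [Module.Basis.det_self] at this

end Aux

set_option maxHeartbeats 1000000 in
/-- Let H ⊆ ⋀²V₆ be 4-dimensional and ω₀ ∈ H of rank 4 (ω₀∧ω₀ ≠ 0, ω₀∧ω₀∧ω₀ = 0),
with support the 4-dimensional subspace V₄ (so ω₀ ∈ ⋀²V₄). If ω₀∧ω₀∧ω = 0 for every
ω ∈ H then H ⊆ V₄∧V₆. -/
theorem cone_support (V : Type*) [AddCommGroup V] [Module ℂ V]
    [FiniteDimensional ℂ V] (h6 : Module.finrank ℂ V = 6)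
    (H : Submodule ℂ (ExteriorAlgebra ℂ V)) (h4H : Module.finrank ℂ H = 4)
    (hHdeg : H ≤ Submodule.span ℂ
      {x : ExteriorAlgebra ℂ V | ∃ a b : V, x = ExteriorAlgebra.ι ℂ a * ExteriorAlgebra.ι ℂ b})
    (ω₀ : ExteriorAlgebra ℂ V) (hω₀H : ω₀ ∈ H)
    (V4 : Submodule ℂ V) (h4 : Module.finrank ℂ V4 = 4)
    (hsupp : ω₀ ∈ Submodule.span ℂ
      {x : ExteriorAlgebra ℂ V | ∃ u ∈ V4, ∃ w ∈ V4,
        x = ExteriorAlgebra.ι ℂ u * ExteriorAlgebra.ι ℂ w})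
    (hr4 : ω₀ * ω₀ ≠ 0) (hr4' : ω₀ * ω₀ * ω₀ = 0)
    (hann : ∀ ω ∈ H, ω₀ * ω₀ * ω = 0) :
    H ≤ Submodule.span ℂ
      {x : ExteriorAlgebra ℂ V | ∃ u ∈ V4, ∃ w : V,
        x = ExteriorAlgebra.ι ℂ u * ExteriorAlgebra.ι ℂ w} := by
  classical
  -- construct an adapted basis
  obtain ⟨W, hW⟩ := Submodule.exists_isCompl V4
  have hW2 : Module.finrank ℂ W = 2 := by
    have := Submodule.finrank_add_eq_of_isCompl hW
    omega
  let b4 : Module.Basis (Fin 4) ℂ V4 := Module.finBasisOfFinrankEq ℂ V4 h4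
  let bW : Module.Basis (Fin 2) ℂ W := Module.finBasisOfFinrankEq ℂ W hW2
  let b : Module.Basis (Fin 4 ⊕ Fin 2) ℂ V := (b4.prod bW).map (Submodule.prodEquivOfIsCompl V4 W hW)
  let b6 : Module.Basis (Fin 6) ℂ V := b.reindex finSumFinEquiv
  have hb4 : ∀ i : Fin 4, (b4 i : V) = b6 (Fin.castAdd 2 i) := by
    intro i
    rw [Module.Basis.reindex_apply, finSumFinEquiv_symm_apply_castAdd]
    simp only [b, Module.Basis.map_apply, Module.Basis.prod_apply]
    simp [Submodule.coe_prodEquivOfIsCompl]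
  have hmem4 : ∀ i : Fin 6, (i : ℕ) < 4 → b6 i ∈ V4 := by
    intro i hi
    have : i = Fin.castAdd 2 ⟨(i : ℕ), hi⟩ := by ext; simp
    rw [this, ← hb4 ⟨(i : ℕ), hi⟩]
    exact (b4 _).2
  -- the two basic top forms
  set T4 : ExteriorAlgebra ℂ V := ιMulti ℂ 4 (fun i => (b4 i : V)) with hT4
  set T6 : ExteriorAlgebra ℂ V := ιMulti ℂ 6 (fun i => b6 i) with hT6
  have hT6ne : T6 ≠ 0 := cs_T6_ne_zero b6
  set F : ExteriorAlgebra ℂ V := ι ℂ (b6 4) * ι ℂ (b6 5) with hF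
  have hb40 : (b4 0 : V) = b6 0 := by rw [hb4]; congr 1
  have hb41 : (b4 1 : V) = b6 1 := by rw [hb4]; congr 1
  have hb42 : (b4 2 : V) = b6 2 := by rw [hb4]; congr 1
  have hb43 : (b4 3 : V) = b6 3 := by rw [hb4]; congr 1
  have hT4F : T4 * F = T6 := by
    rw [hT4, hT6, hF, cs_shape4, cs_shape6, hb40, hb41, hb42, hb43]
    simp only [mul_assoc]
  -- ω₀ * ω₀ is a scalar multiple of T4
  set S4 : Set (ExteriorAlgebra ℂ V) :=
    {x | ∃ u ∈ V4, ∃ w ∈ V4, x = ι ℂ u * ι ℂ w} with hS4def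
  have hsupp2 : ω₀ * ω₀ ∈ Submodule.span ℂ S4 * Submodule.span ℂ S4 :=
    Submodule.mul_mem_mul hsupp hsupp
  rw [Submodule.span_mul_span] at hsupp2
  have hS4T4 : Submodule.span ℂ (S4 * S4) ≤ Submodule.span ℂ {T4} := by
    rw [Submodule.span_le]
    rintro x ⟨x1, hx1, x2, hx2, rfl⟩
    obtain ⟨u1, hu1, u2, hu2, rfl⟩ := hx1
    obtain ⟨u3, hu3, u4, hu4, rfl⟩ := hx2
    set G : V4 [⋀^Fin 4]→ₗ[ℂ] ExteriorAlgebra ℂ V :=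
      (ιMulti ℂ 4).compLinearMap V4.subtype with hG
    have hGb : G (fun i => b4 i) = T4 := by
      rw [hG, AlternatingMap.compLinearMap_apply]; rfl
    have h1 : ι ℂ u1 * ι ℂ u2 * (ι ℂ u3 * ι ℂ u4)
        = G ![⟨u1, hu1⟩, ⟨u2, hu2⟩, ⟨u3, hu3⟩, ⟨u4, hu4⟩] := by
      rw [hG, AlternatingMap.compLinearMap_apply, cs_shape4]
      simp [mul_assoc]
    show (ι ℂ u1 * ι ℂ u2) * (ι ℂ u3 * ι ℂ u4) ∈ (Submodule.span ℂ {T4} : Set _)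
    rw [h1, cs_alt_eq_det_smul b4, hGb]
    exact Submodule.mem_span_singleton.mpr ⟨_, rfl⟩
  obtain ⟨c, hc⟩ := Submodule.mem_span_singleton.mp (hS4T4 hsupp2)
  have hcne : c ≠ 0 := by rintro rfl; rw [zero_smul] at hc; exact hr4 hc.symm
  -- products of five elements of V4 vanish
  have hA5 : ∀ v : Fin 5 → V4, ιMulti ℂ 5 (fun i => (v i : V)) = 0 := by
    intro v
    have hdep : ¬ LinearIndependent ℂ v := by
      intro h
      have := h.fintype_card_le_finrank
      rw [h4] at this
      simp at this
    have : ((ιMulti ℂ 5).compLinearMap V4.subtype) v = 0 :=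
      AlternatingMap.map_linearDependent _ _ hdep
    simpa using this
  -- T4 * ι u = 0 for u ∈ V4
  have hT4u : ∀ u ∈ V4, T4 * ι ℂ u = 0 := by
    intro u hu
    have h5 : ι ℂ u * T4 = 0 := by
      have hv : (fun i => ((Fin.cons (⟨u, hu⟩ : V4) (fun j => b4 j) : Fin 5 → V4) i : V))
          = Fin.cons u (fun j => (b4 j : V)) := by
        funext i
        refine Fin.cases ?_ ?_ i <;> simp
      have := hA5 (Fin.cons (⟨u, hu⟩ : V4) (fun j => b4 j))
      rw [hv] at this
      rw [← this, ιMulti_succ_apply]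
      simp [Matrix.vecTail, Function.comp_def, hT4]
    rw [hT4, cs_shape4] at h5 ⊢
    rw [cs_comm4, h5]
  -- T4 kills the target span
  set S2 : Set (ExteriorAlgebra ℂ V) :=
    {x | ∃ u ∈ V4, ∃ w : V, x = ι ℂ u * ι ℂ w} with hS2def
  have hT4S2 : ∀ s ∈ Submodule.span ℂ S2, T4 * s = 0 := by
    intro s hs
    have hle : Submodule.span ℂ S2 ≤ LinearMap.ker (LinearMap.mulLeft ℂ T4) := by
      rw [Submodule.span_le]
      rintro _ ⟨u, hu, w, rfl⟩
      simp only [SetLike.mem_coe, LinearMap.mem_ker, LinearMap.mulLeft_apply]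
      rw [← mul_assoc, hT4u u hu, zero_mul]
    exact hle hs
  -- decomposition of degree-2 elements
  set Ksup : Submodule ℂ (ExteriorAlgebra ℂ V) :=
    Submodule.span ℂ S2 ⊔ Submodule.span ℂ {F} with hKsup
  have h36 : ∀ i j : Fin 6, ι ℂ (b6 i) * ι ℂ (b6 j) ∈ Ksup := by
    have base : ∀ i j : Fin 6, (i : ℕ) < 4 → ι ℂ (b6 i) * ι ℂ (b6 j) ∈ Ksup := by
      intro i j hi
      exact Submodule.mem_sup_left
        (Submodule.subset_span ⟨b6 i, hmem4 i hi, b6 j, rfl⟩)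
    intro i j
    by_cases hi : (i : ℕ) < 4
    · exact base i j hi
    by_cases hj : (j : ℕ) < 4
    · rw [cs_sw]
      exact neg_mem (base j i hj)
    · have hi6 : (i : ℕ) < 6 := i.2
      have hj6 : (j : ℕ) < 6 := j.2
      have hi' : i = 4 ∨ i = 5 := by
        rcases Nat.lt_or_ge (i : ℕ) 5 with h | h
        · left; ext; omega
        · right; ext; omega
      have hj' : j = 4 ∨ j = 5 := by
        rcases Nat.lt_or_ge (j : ℕ) 5 with h | h
        · left; ext; omega
        · right; ext; omega
      rcases hi' with rfl | rfl <;> rcases hj' with rfl | rfl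
      · rw [ι_sq_zero]; exact zero_mem _
      · exact Submodule.mem_sup_right (Submodule.mem_span_singleton_self F)
      · rw [cs_sw]
        exact neg_mem (Submodule.mem_sup_right (Submodule.mem_span_singleton_self F))
      · rw [ι_sq_zero]; exact zero_mem _
  have hgen1 : ∀ i : Fin 6, ∀ w : V, ι ℂ (b6 i) * ι ℂ w ∈ Ksup := by
    intro i w
    have hw : w ∈ Submodule.span ℂ (Set.range b6) := by rw [b6.span_eq]; trivial
    have hle : Submodule.span ℂ (Set.range b6)
        ≤ Ksup.comap ((LinearMap.mulLeft ℂ (ι ℂ (b6 i))).comp (ι ℂ (M := V))) := by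
      rw [Submodule.span_le]
      rintro _ ⟨j, rfl⟩
      exact h36 i j
    exact hle hw
  have hgen : ∀ a w : V, ι ℂ a * ι ℂ w ∈ Ksup := by
    intro a w
    have ha : a ∈ Submodule.span ℂ (Set.range b6) := by rw [b6.span_eq]; trivial
    have hle : Submodule.span ℂ (Set.range b6)
        ≤ Ksup.comap ((LinearMap.mulRight ℂ (ι ℂ w)).comp (ι ℂ (M := V))) := by
      rw [Submodule.span_le]
      rintro _ ⟨j, rfl⟩
      exact hgen1 j w
    exact hle ha
  -- final argument
  intro ω hω
  have hω2 : ω ∈ Ksup := by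
    refine Submodule.span_le.mpr ?_ (hHdeg hω)
    rintro _ ⟨a, bb, rfl⟩
    exact hgen a bb
  rw [hKsup] at hω2
  obtain ⟨s, hs, f, hf, rfl⟩ := Submodule.mem_sup.mp hω2
  obtain ⟨t, rfl⟩ := Submodule.mem_span_singleton.mp hf
  have h0 : ω₀ * ω₀ * (s + t • F) = 0 := hann _ hω
  rw [← hc] at h0
  have hexp : c • T4 * (s + t • F) = (c * t) • T6 := by
    rw [mul_add, smul_mul_assoc, hT4S2 s hs, smul_zero, zero_add,
      mul_smul_comm, smul_mul_assoc, hT4F, smul_smul, mul_comm t c]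
  rw [hexp] at h0
  have hct : c * t = 0 := by
    by_contra hne
    exact hT6ne (by simpa [hne] using h0)
  have ht : t = 0 := by
    rcases mul_eq_zero.mp hct with h | h
    · exact absurd h hcne
    · exact h
  rw [ht, zero_smul, add_zero]
  exact hs
end
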